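/- Soundness of the CN calculus for epistemic weight models: every formula φ of L_CN derivable in the CN calculus is true at every world of every epistemic weight model. -/

import Mathlib

/-- The language L_CN: `φ ::= ⊤ | p | ¬φ | (φ∧φ) | B_a(φ,φ)`. -/
inductive CNForm (Agt Prp : Type) : Type
  | top : CNForm Agt Prp
  | atom : Prp → CNForm Agt Prp
  | neg : CNForm Agt Prp → CNForm Agt Prp
  | and : CNForm Agt Prp → CNForm Agt Prp → CNForm Agt Prp
  | bel : Agt → CNForm Agt Prp → CNForm Agt Prp → CNForm Agt Prp
namespace CNForm

/-- Material implication, defined from `¬` and `∧`. -/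
def imp {Agt Prp : Type} (φ ψ : CNForm Agt Prp) : CNForm Agt Prp := .neg (.and φ (.neg ψ))

/-- Disjunction, defined from `¬` and `∧`. -/
def or {Agt Prp : Type} (φ ψ : CNForm Agt Prp) : CNForm Agt Prp := .neg (.and (.neg φ) (.neg ψ))

/-- Biconditional. -/
def iff {Agt Prp : Type} (φ ψ : CNForm Agt Prp) : CNForm Agt Prp := .and (imp φ ψ) (imp ψ φ)

/-- Knowledge: `K_a φ := ¬B_a(¬φ,⊤)`. -/
def K {Agt Prp : Type} (a : Agt) (φ : CNForm Agt Prp) : CNForm Agt Prp := .neg (.bel a (.neg φ) .top)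

end CNForm

/-- Boolean evaluation of a formula under an assignment `v` of truth values to
the "atomic" formulas (proposition letters and belief formulas), interpreting
`⊤`, `¬`, `∧` classically. -/
def boolEval {Agt Prp : Type} (v : CNForm Agt Prp → Prop) : CNForm Agt Prp → Prop
  | .top => True
  | .atom p => v (.atom p)
  | .neg φ => ¬ boolEval v φ
  | .and φ ψ => boolEval v φ ∧ boolEval v ψ
  | .bel a φ ψ => v (.bel a φ ψ)

/-- `φ` is an instance of a propositional tautology: it evaluates to true under
every assignment of truth values to proposition letters and belief formulas. -/
def CNTaut {Agt Prp : Type} (φ : CNForm Agt Prp) : Prop := ∀ v, boolEval v φ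

/-- The CN calculus. -/
inductive CNDeriv {Agt Prp : Type} : CNForm Agt Prp → Prop
  | taut {φ : CNForm Agt Prp} : CNTaut φ → CNDeriv φ
  | distK (a : Agt) (φ ψ : CNForm Agt Prp) :
      CNDeriv ((CNForm.K a (φ.imp ψ)).imp ((CNForm.K a φ).imp (CNForm.K a ψ)))
  | tAx (a : Agt) (φ : CNForm Agt Prp) : CNDeriv ((CNForm.K a φ).imp φ)
  | fiveB (a : Agt) (φ ψ : CNForm Agt Prp) :
      CNDeriv ((CNForm.bel a φ ψ).imp (CNForm.K a (.bel a φ ψ)))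
  | fourB (a : Agt) (φ ψ : CNForm Agt Prp) :
      CNDeriv ((CNForm.neg (.bel a φ ψ)).imp (CNForm.K a (.neg (.bel a φ ψ))))
  | dAx (a : Agt) (φ ψ : CNForm Agt Prp) :
      CNDeriv ((CNForm.bel a φ ψ).imp (.neg (.bel a φ (.neg ψ))))
  | ecAx (a : Agt) (φ ψ χ : CNForm Agt Prp) :
      CNDeriv ((CNForm.K a (φ.iff ψ)).imp ((CNForm.bel a φ χ).imp (.bel a ψ χ)))
  | mAx (a : Agt) (φ ψ χ : CNForm Agt Prp) :
      CNDeriv ((CNForm.K a (φ.imp ψ)).imp ((CNForm.bel a χ φ).imp (.bel a χ ψ)))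
  | cAx (a : Agt) (φ ψ : CNForm Agt Prp) :
      CNDeriv ((CNForm.bel a φ ψ).imp (.bel a φ (.and φ ψ)))
  | scAx (a : Agt) (φ ψ χ : CNForm Agt Prp) :
      CNDeriv (((CNForm.neg (.bel a χ (.neg φ))).and
          (.neg (CNForm.K a (.neg (χ.and ((CNForm.neg φ).and ψ)))))).imp
        (.bel a χ (φ.or ψ)))
  | mp {φ ψ : CNForm Agt Prp} : CNDeriv (φ.imp ψ) → CNDeriv φ → CNDeriv ψ
  | necK {φ : CNForm Agt Prp} (a : Agt) : CNDeriv φ → CNDeriv (CNForm.K a φ)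

/-- An epistemic weight model `(W, ∼, L, V)`: `W` nonempty countable, `∼_a`
equivalence relations, `L_a : W → ℚ` positive with summable weights on each
knowledge cell, `V` a valuation. -/
structure WeightModel (Agt Prp W : Type) : Type where
  nonempty : Nonempty W
  countable : Countable W
  sim : Agt → W → W → Prop
  equiv : ∀ a, Equivalence (sim a)
  wt : Agt → W → ℚ
  wt_pos : ∀ a w, 0 < wt a w
  wt_summable : ∀ a w, Summable (fun u : {v // sim a w v} => ((wt a u.1 : ℚ) : ℝ))
  V : Prp → Set W

/-- Truth of an L_CN formula in an epistemic weight model: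
`B_a(φ,ψ)` holds at `w` iff the total weight of `[w]_a ∩ ⟦φ∧ψ⟧` strictly
exceeds the total weight of `[w]_a ∩ ⟦φ∧¬ψ⟧`. -/
def WeightModel.truth {Agt Prp W : Type} (M : WeightModel Agt Prp W) :
    CNForm Agt Prp → W → Prop
  | .top, _ => True
  | .atom p, w => w ∈ M.V p
  | .neg φ, w => ¬ M.truth φ w
  | .and φ ψ, w => M.truth φ w ∧ M.truth ψ w
  | .bel a φ ψ, w =>
      (∑' u : {v // M.sim a w v ∧ M.truth φ v ∧ M.truth ψ v}, ((M.wt a u.1 : ℚ) : ℝ)) >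
      (∑' u : {v // M.sim a w v ∧ M.truth φ v ∧ ¬ M.truth ψ v}, ((M.wt a u.1 : ℚ) : ℝ))

namespace WeightModel

open Classical in
/-- Weight of the part of the `a`-cell of `w` satisfying `P`. -/
noncomputable def cs {Agt Prp W : Type} (M : WeightModel Agt Prp W)
    (a : Agt) (w : W) (P : W → Prop) : ℝ :=
  ∑' u : {v // M.sim a w v}, if P u.1 then ((M.wt a u.1 : ℚ) : ℝ) else 0

variable {Agt Prp W : Type} (M : WeightModel Agt Prp W)

open Classical in
lemma summable_ind (a : Agt) (w : W) (P : W → Prop) :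
    Summable (fun u : {v // M.sim a w v} =>
      if P u.1 then ((M.wt a u.1 : ℚ) : ℝ) else 0) := by
  refine Summable.of_nonneg_of_le (fun u => ?_) (fun u => ?_) (M.wt_summable a w)
  · split
    · exact_mod_cast (M.wt_pos a u.1).le
    · exact le_rfl
  · split
    · exact le_rfl
    · exact_mod_cast (M.wt_pos a u.1).le

lemma tsum_sub_eq (a : Agt) (w : W) (P : W → Prop) :
    (∑' u : {v // M.sim a w v ∧ P v}, ((M.wt a u.1 : ℚ) : ℝ)) = M.cs a w P := by
  classical
  have h1 : (∑' u : {v // M.sim a w v ∧ P v}, ((M.wt a u.1 : ℚ) : ℝ))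
      = ∑' y : ({u : {v // M.sim a w v} | P u.1} : Set {v // M.sim a w v}),
          ((M.wt a y.1.1 : ℚ) : ℝ) :=
    Equiv.tsum_eq (⟨fun x => ⟨⟨x.1, x.2.1⟩, x.2.2⟩, fun y => ⟨y.1.1, y.1.2, y.2⟩,
        fun _ => rfl, fun _ => rfl⟩ :
        {v // M.sim a w v ∧ P v} ≃
          ({u : {v // M.sim a w v} | P u.1} : Set {v // M.sim a w v}))
      (fun y : ({u : {v // M.sim a w v} | P u.1} : Set {v // M.sim a w v}) =>
        ((M.wt a y.1.1 : ℚ) : ℝ))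
  rw [h1, tsum_subtype _ (fun u : {v // M.sim a w v} => ((M.wt a u.1 : ℚ) : ℝ))]
  refine tsum_congr fun u => ?_
  by_cases h : P u.1
  · rw [Set.indicator_of_mem
      (show u ∈ {u : {v // M.sim a w v} | P u.1} from h), if_pos h]
  · rw [Set.indicator_of_notMem
      (show u ∉ {u : {v // M.sim a w v} | P u.1} from h), if_neg h]

lemma cs_nonneg (a : Agt) (w : W) (P : W → Prop) : 0 ≤ M.cs a w P := by
  classical
  refine tsum_nonneg fun u => ?_
  split
  · exact_mod_cast (M.wt_pos a u.1).le
  · exact le_rfl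

lemma cs_mono (a : Agt) (w : W) {P Q : W → Prop}
    (h : ∀ v, M.sim a w v → P v → Q v) : M.cs a w P ≤ M.cs a w Q := by
  classical
  refine Summable.tsum_le_tsum (fun u => ?_) (M.summable_ind a w P) (M.summable_ind a w Q)
  by_cases hP : P u.1
  · rw [if_pos hP, if_pos (h u.1 u.2 hP)]
  · rw [if_neg hP]
    split
    · exact_mod_cast (M.wt_pos a u.1).le
    · exact le_rfl

lemma cs_congr (a : Agt) (w : W) {P Q : W → Prop}
    (h : ∀ v, M.sim a w v → (P v ↔ Q v)) : M.cs a w P = M.cs a w Q :=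
  le_antisymm (M.cs_mono a w fun v hv hp => (h v hv).1 hp)
    (M.cs_mono a w fun v hv hq => (h v hv).2 hq)

lemma cs_lt (a : Agt) (w : W) {P Q : W → Prop}
    (h : ∀ v, M.sim a w v → P v → Q v)
    (v : W) (hv : M.sim a w v) (hQ : Q v) (hP : ¬ P v) :
    M.cs a w P < M.cs a w Q := by
  classical
  refine Summable.tsum_lt_tsum (i := (⟨v, hv⟩ : {u // M.sim a w u})) (fun u => ?_) ?_
    (M.summable_ind a w P) (M.summable_ind a w Q)
  · by_cases hPu : P u.1
    · rw [if_pos hPu, if_pos (h u.1 u.2 hPu)]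
    · rw [if_neg hPu]
      split
      · push_cast; exact_mod_cast (M.wt_pos a u.1).le
      · exact le_rfl
  · rw [if_neg hP, if_pos hQ]
    exact_mod_cast M.wt_pos a v

lemma cs_eq_zero (a : Agt) (w : W) {P : W → Prop}
    (h : ∀ v, M.sim a w v → ¬ P v) : M.cs a w P = 0 := by
  classical
  have : ∀ u : {v // M.sim a w v},
      (if P u.1 then ((M.wt a u.1 : ℚ) : ℝ) else 0) = 0 :=
    fun u => if_neg (h u.1 u.2)
  rw [show M.cs a w P = _ from tsum_congr this, tsum_zero]

lemma cs_pos (a : Agt) (w : W) {P : W → Prop}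
    (v : W) (hv : M.sim a w v) (hP : P v) : 0 < M.cs a w P := by
  have h0 : M.cs a w (fun _ => False) = 0 := M.cs_eq_zero a w (fun _ _ hf => hf)
  have := M.cs_lt a w (P := fun _ => False) (Q := P)
    (fun _ _ hf => hf.elim) v hv hP not_false
  rwa [h0] at this

lemma cs_sim (a : Agt) {w v : W} (h : M.sim a w v) (P : W → Prop) :
    M.cs a w P = M.cs a v P := by
  classical
  exact Equiv.tsum_eq (α := ℝ)
    (⟨fun x => ⟨x.1, (M.equiv a).trans ((M.equiv a).symm h) x.2⟩,
      fun x => ⟨x.1, (M.equiv a).trans h x.2⟩,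
      fun _ => rfl, fun _ => rfl⟩ : {u // M.sim a w u} ≃ {u // M.sim a v u})
    (fun u : {u // M.sim a v u} => if P u.1 then ((M.wt a u.1 : ℚ) : ℝ) else 0)

lemma truth_neg (φ : CNForm Agt Prp) (w : W) :
    M.truth (.neg φ) w ↔ ¬ M.truth φ w := Iff.rfl

lemma truth_and (φ ψ : CNForm Agt Prp) (w : W) :
    M.truth (.and φ ψ) w ↔ M.truth φ w ∧ M.truth ψ w := Iff.rfl

lemma truth_top (w : W) : M.truth (.top : CNForm Agt Prp) w ↔ True := Iff.rfl

lemma truth_imp (φ ψ : CNForm Agt Prp) (w : W) :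
    M.truth (φ.imp ψ) w ↔ (M.truth φ w → M.truth ψ w) := by
  unfold CNForm.imp
  rw [truth_neg, truth_and, truth_neg]
  tauto

lemma truth_or (φ ψ : CNForm Agt Prp) (w : W) :
    M.truth (φ.or ψ) w ↔ (M.truth φ w ∨ M.truth ψ w) := by
  unfold CNForm.or
  rw [truth_neg, truth_and, truth_neg, truth_neg]
  tauto

lemma truth_iff (φ ψ : CNForm Agt Prp) (w : W) :
    M.truth (φ.iff ψ) w ↔ (M.truth φ w ↔ M.truth ψ w) := by
  unfold CNForm.iff
  rw [truth_and, truth_imp, truth_imp]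
  tauto

lemma truth_bel (a : Agt) (φ ψ : CNForm Agt Prp) (w : W) :
    M.truth (.bel a φ ψ) w ↔
      M.cs a w (fun v => M.truth φ v ∧ ¬ M.truth ψ v) <
      M.cs a w (fun v => M.truth φ v ∧ M.truth ψ v) := by
  show (_ > _) ↔ _
  rw [M.tsum_sub_eq a w (fun v => M.truth φ v ∧ M.truth ψ v),
    M.tsum_sub_eq a w (fun v => M.truth φ v ∧ ¬ M.truth ψ v)]

lemma truth_K (a : Agt) (φ : CNForm Agt Prp) (w : W) :
    M.truth (CNForm.K a φ) w ↔ ∀ v, M.sim a w v → M.truth φ v := by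
  have h1 : M.truth (CNForm.K a φ) w ↔
      ¬ (M.cs a w (fun v => M.truth (.neg φ) v ∧ ¬ M.truth (.top) v) <
         M.cs a w (fun v => M.truth (.neg φ) v ∧ M.truth (.top) v)) :=
    not_congr (M.truth_bel a (.neg φ) .top w)
  rw [h1]
  have h0 : M.cs a w (fun v => M.truth (.neg φ) v ∧ ¬ M.truth (.top) v) = 0 :=
    M.cs_eq_zero a w (fun v _ hc => hc.2 trivial)
  rw [h0]
  constructor
  · intro h v hv
    by_contra hf
    exact h (M.cs_pos a w (P := fun v => M.truth (.neg φ) v ∧ M.truth .top v)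
      v hv ⟨hf, trivial⟩)
  · intro h
    have hz : M.cs a w (fun v => M.truth (.neg φ) v ∧ M.truth .top v) = 0 :=
      M.cs_eq_zero a w (fun v hv hc => hc.1 (h v hv))
    rw [hz]
    exact lt_irrefl 0

lemma boolEval_truth (w : W) (ψ : CNForm Agt Prp) :
    boolEval (fun χ => M.truth χ w) ψ ↔ M.truth ψ w := by
  induction ψ with
  | top => exact Iff.rfl
  | atom p => exact Iff.rfl
  | neg φ ih => exact not_congr ih
  | and φ χ ih1 ih2 => exact and_congr ih1 ih2
  | bel a φ χ => exact Iff.rfl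

end WeightModel
/-- Soundness of the CN calculus for epistemic weight models. -/
theorem cn_sound_weight {Agt Prp : Type} [Finite Agt] (φ : CNForm Agt Prp)
    (h : CNDeriv φ) :
    ∀ (W : Type) (M : WeightModel Agt Prp W) (w : W), M.truth φ w := by
  induction h with
  | @taut φ h =>
    intro W M w
    exact (M.boolEval_truth w φ).1 (h _)
  | distK a φ ψ =>
    intro W M w
    rw [M.truth_imp, M.truth_K, M.truth_imp, M.truth_K, M.truth_K]
    intro h1 h2 v hv
    exact (M.truth_imp φ ψ v).1 (h1 v hv) (h2 v hv)
  | tAx a φ =>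
    intro W M w
    rw [M.truth_imp, M.truth_K]
    intro h
    exact h w ((M.equiv a).refl w)
  | fiveB a φ ψ =>
    intro W M w
    rw [M.truth_imp, M.truth_K]
    intro h v hv
    rw [M.truth_bel] at h
    rw [M.truth_bel, ← M.cs_sim a hv, ← M.cs_sim a hv]
    exact h
  | fourB a φ ψ =>
    intro W M w
    rw [M.truth_imp, M.truth_K]
    intro h v hv
    rw [M.truth_neg, M.truth_bel] at h
    rw [M.truth_neg, M.truth_bel, ← M.cs_sim a hv, ← M.cs_sim a hv]
    exact h
  | dAx a φ ψ =>
    intro W M w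
    rw [M.truth_imp, M.truth_neg, M.truth_bel, M.truth_bel]
    intro h hc
    have he2 : M.cs a w (fun v => M.truth φ v ∧ M.truth (.neg ψ) v)
        = M.cs a w (fun v => M.truth φ v ∧ ¬ M.truth ψ v) :=
      M.cs_congr a w (fun v _ => by rw [M.truth_neg])
    have he : M.cs a w (fun v => M.truth φ v ∧ ¬ M.truth (.neg ψ) v)
        = M.cs a w (fun v => M.truth φ v ∧ M.truth ψ v) :=
      M.cs_congr a w (fun v _ => by rw [M.truth_neg, not_not])
    rw [he, he2] at hc
    linarith
  | ecAx a φ ψ χ =>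
    intro W M w
    rw [M.truth_imp, M.truth_K, M.truth_imp, M.truth_bel, M.truth_bel]
    intro hk hb
    have h' : ∀ v, M.sim a w v → (M.truth φ v ↔ M.truth ψ v) :=
      fun v hv => (M.truth_iff φ ψ v).1 (hk v hv)
    have e1 : M.cs a w (fun v => M.truth ψ v ∧ M.truth χ v)
        = M.cs a w (fun v => M.truth φ v ∧ M.truth χ v) :=
      M.cs_congr a w (fun v hv => by rw [h' v hv])
    have e2 : M.cs a w (fun v => M.truth ψ v ∧ ¬ M.truth χ v)
        = M.cs a w (fun v => M.truth φ v ∧ ¬ M.truth χ v) :=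
      M.cs_congr a w (fun v hv => by rw [h' v hv])
    rw [e1, e2]
    exact hb
  | mAx a φ ψ χ =>
    intro W M w
    rw [M.truth_imp, M.truth_K, M.truth_imp, M.truth_bel, M.truth_bel]
    intro hk hb
    have h' : ∀ v, M.sim a w v → M.truth φ v → M.truth ψ v :=
      fun v hv => (M.truth_imp φ ψ v).1 (hk v hv)
    have l1 : M.cs a w (fun v => M.truth χ v ∧ M.truth φ v)
        ≤ M.cs a w (fun v => M.truth χ v ∧ M.truth ψ v) :=
      M.cs_mono a w (fun v hv hc => ⟨hc.1, h' v hv hc.2⟩)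
    have l2 : M.cs a w (fun v => M.truth χ v ∧ ¬ M.truth ψ v)
        ≤ M.cs a w (fun v => M.truth χ v ∧ ¬ M.truth φ v) :=
      M.cs_mono a w (fun v hv hc => ⟨hc.1, fun hφ => hc.2 (h' v hv hφ)⟩)
    linarith
  | cAx a φ ψ =>
    intro W M w
    rw [M.truth_imp, M.truth_bel, M.truth_bel]
    intro h
    have e1 : M.cs a w (fun v => M.truth φ v ∧ M.truth (.and φ ψ) v)
        = M.cs a w (fun v => M.truth φ v ∧ M.truth ψ v) :=
      M.cs_congr a w (fun v _ => by rw [M.truth_and]; tauto)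
    have e2 : M.cs a w (fun v => M.truth φ v ∧ ¬ M.truth (.and φ ψ) v)
        = M.cs a w (fun v => M.truth φ v ∧ ¬ M.truth ψ v) :=
      M.cs_congr a w (fun v _ => by rw [M.truth_and]; tauto)
    rw [e1, e2]
    exact h
  | scAx a φ ψ χ =>
    intro W M w
    rw [M.truth_imp]
    rintro ⟨h1, h2⟩
    rw [M.truth_neg, M.truth_bel, not_lt] at h1
    rw [M.truth_neg, M.truth_K] at h2
    push_neg at h2
    obtain ⟨v, hv, hθ⟩ := h2
    rw [M.truth_neg, not_not, M.truth_and, M.truth_and, M.truth_neg] at hθ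
    obtain ⟨hχ, hnφ, hψ⟩ := hθ
    have hA : M.cs a w (fun u => M.truth χ u ∧ ¬ M.truth φ u)
        ≤ M.cs a w (fun u => M.truth χ u ∧ M.truth φ u) := by
      have e1 : M.cs a w (fun u => M.truth χ u ∧ M.truth (.neg φ) u)
          = M.cs a w (fun u => M.truth χ u ∧ ¬ M.truth φ u) :=
        M.cs_congr a w (fun u _ => by rw [M.truth_neg])
      have e2 : M.cs a w (fun u => M.truth χ u ∧ ¬ M.truth (.neg φ) u)
          = M.cs a w (fun u => M.truth χ u ∧ M.truth φ u) :=
        M.cs_congr a w (fun u _ => by rw [M.truth_neg, not_not])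
      rw [e1, e2] at h1
      exact h1
    have hB : M.cs a w (fun u => M.truth χ u ∧ ¬ M.truth φ u ∧ ¬ M.truth ψ u)
        ≤ M.cs a w (fun u => M.truth χ u ∧ ¬ M.truth φ u) :=
      M.cs_mono a w (fun u _ hc => ⟨hc.1, hc.2.1⟩)
    have hC : M.cs a w (fun u => M.truth χ u ∧ M.truth φ u)
        < M.cs a w (fun u => M.truth χ u ∧ (M.truth φ u ∨ M.truth ψ u)) :=
      M.cs_lt a w (fun u _ hc => ⟨hc.1, Or.inl hc.2⟩) v hv
        ⟨hχ, Or.inr hψ⟩ (fun hc => hnφ hc.2)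
    rw [M.truth_bel]
    have e3 : M.cs a w (fun u => M.truth χ u ∧ M.truth (φ.or ψ) u)
        = M.cs a w (fun u => M.truth χ u ∧ (M.truth φ u ∨ M.truth ψ u)) :=
      M.cs_congr a w (fun u _ => by rw [M.truth_or])
    have e4 : M.cs a w (fun u => M.truth χ u ∧ ¬ M.truth (φ.or ψ) u)
        = M.cs a w (fun u => M.truth χ u ∧ ¬ M.truth φ u ∧ ¬ M.truth ψ u) :=
      M.cs_congr a w (fun u _ => by rw [M.truth_or]; tauto)
    rw [e3, e4]
    linarith
  | mp hpq hp ihpq ihp =>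
    intro W M w
    exact (M.truth_imp _ _ w).1 (ihpq W M w) (ihp W M w)
  | necK a hd ih =>
    intro W M w
    exact (M.truth_K a _ w).2 fun v _ => ih W M v
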